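/- Let ρ̂ ∈ (0,1), Ĉ > 0, let L̂ be slowly varying at 0⁺, and let ψ̂ : (0,∞) → (0,∞) be nondecreasing with ψ̂(x)/(Ĉ x^{ρ̂} L̂(x)) → 1 as x → 0⁺ (and set ψ̂(0) := 0). Then for every b > 0 and ε > 0 there exists x₀ > 0 such that for all x ∈ (0, x₀] and all y ∈ [0, b]: | ψ̂(x y)/(Ĉ x^{ρ̂} L̂(x)) − y^{ρ̂} | ≤ ε. -/

import Mathlib

open Filter Topology Set

def SlowlyVaryingAtZero (L : ℝ → ℝ) : Prop :=
  ∀ l : ℝ, 0 < l → Tendsto (fun x : ℝ => L (l * x) / L x) (𝓝[>] 0) (𝓝 1)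

lemma real_rpow_add_le_add_rpow {a b p : ℝ} (ha : 0 ≤ a) (hb : 0 ≤ b)
    (hp : 0 ≤ p) (hp1 : p ≤ 1) : (a + b) ^ p ≤ a ^ p + b ^ p := by
  lift a to NNReal using ha
  lift b to NNReal using hb
  rw [← NNReal.coe_add, ← NNReal.coe_rpow, ← NNReal.coe_rpow, ← NNReal.coe_rpow,
    ← NNReal.coe_add, NNReal.coe_le_coe]
  exact NNReal.rpow_add_le_add_rpow a b hp hp1

lemma pointwise_limit (rhoh : ℝ) (hr : 0 < rhoh)
    (Ch : ℝ) (hCh : 0 < Ch)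
    (Lh : ℝ → ℝ) (hLhpos : ∀ x : ℝ, 0 < x → 0 < Lh x)
    (hLhsv : ∀ l : ℝ, 0 < l → Tendsto (fun x : ℝ => Lh (l * x) / Lh x) (𝓝[>] 0) (𝓝 1))
    (psih : ℝ → ℝ)
    (hpsih : Tendsto (fun x : ℝ => psih x / (Ch * x ^ rhoh * Lh x)) (𝓝[>] 0) (𝓝 1))
    (c : ℝ) (hc : 0 < c) :
    Tendsto (fun x : ℝ => psih (x * c) / (Ch * x ^ rhoh * Lh x)) (𝓝[>] 0)
      (𝓝 (c ^ rhoh)) := by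
  have hmap : Tendsto (fun x : ℝ => x * c) (𝓝[>] 0) (𝓝[>] 0) := by
    apply tendsto_nhdsWithin_of_tendsto_nhds_of_eventually_within
    · have := (tendsto_id.mul_const c : Tendsto (fun x : ℝ => x * c) (𝓝 (0:ℝ)) (𝓝 (0 * c)))
      simpa using this.mono_left nhdsWithin_le_nhds
    · filter_upwards [self_mem_nhdsWithin] with x hx
      exact mul_pos hx hc
  have h1 : Tendsto (fun x : ℝ => psih (x * c) / (Ch * (x * c) ^ rhoh * Lh (x * c)))
      (𝓝[>] 0) (𝓝 1) := hpsih.comp hmap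
  have h2 : Tendsto (fun x : ℝ => Lh (c * x) / Lh x) (𝓝[>] 0) (𝓝 1) := hLhsv c hc
  have h3 : Tendsto (fun x : ℝ =>
      (psih (x * c) / (Ch * (x * c) ^ rhoh * Lh (x * c))) * (Lh (c * x) / Lh x) * c ^ rhoh)
      (𝓝[>] 0) (𝓝 (1 * 1 * c ^ rhoh)) := (h1.mul h2).mul_const _
  rw [one_mul, one_mul] at h3
  refine h3.congr' ?_
  filter_upwards [self_mem_nhdsWithin] with x hx
  have hx0 : (0:ℝ) < x := hx
  have hmul : (x * c) ^ rhoh = x ^ rhoh * c ^ rhoh := Real.mul_rpow hx0.le hc.le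
  have hLx : Lh x ≠ 0 := (hLhpos x hx0).ne'
  have hLxc : Lh (x * c) ≠ 0 := (hLhpos _ (mul_pos hx0 hc)).ne'
  have hxr : x ^ rhoh ≠ 0 := (Real.rpow_pos_of_pos hx0 rhoh).ne'
  have hcr : c ^ rhoh ≠ 0 := (Real.rpow_pos_of_pos hc rhoh).ne'
  rw [mul_comm c x, hmul]
  field_simp
theorem uniform_regular_variation_estimate
    (rhoh : ℝ) (hrhoh : rhoh ∈ Set.Ioo (0:ℝ) 1)
    (Ch : ℝ) (hCh : 0 < Ch)
    (Lh : ℝ → ℝ) (hLhpos : ∀ x : ℝ, 0 < x → 0 < Lh x)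
    (hLhsv : SlowlyVaryingAtZero Lh)
    (psih : ℝ → ℝ)
    (hpsih0 : psih 0 = 0)
    (hpsihpos : ∀ x : ℝ, 0 < x → 0 < psih x)
    (hpsihmono : MonotoneOn psih (Set.Ici (0:ℝ)))
    (hpsih : Tendsto (fun x : ℝ => psih x / (Ch * x ^ rhoh * Lh x)) (𝓝[>] 0) (𝓝 1)) :
    ∀ b : ℝ, 0 < b → ∀ ε : ℝ, 0 < ε → ∃ x₀ : ℝ, 0 < x₀ ∧
      ∀ x : ℝ, x ∈ Set.Ioc 0 x₀ → ∀ y : ℝ, y ∈ Set.Icc 0 b →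
        |psih (x * y) / (Ch * x ^ rhoh * Lh x) - y ^ rhoh| ≤ ε := by
  obtain ⟨hr, hr1⟩ := hrhoh
  intro b hb ε hε
  have hε3 : (0:ℝ) < ε / 3 := by linarith
  set h0 : ℝ := (ε / 3) ^ (rhoh⁻¹) with hh0def
  have hh0 : 0 < h0 := Real.rpow_pos_of_pos hε3 _
  set h : ℝ := min b h0 with hhdef
  have hh : 0 < h := lt_min hb hh0
  have hhr : h ^ rhoh ≤ ε / 3 := by
    calc h ^ rhoh ≤ h0 ^ rhoh := Real.rpow_le_rpow hh.le (min_le_right _ _) hr.le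
    _ = ε / 3 := Real.rpow_inv_rpow hε3.le hr.ne'
  set n : ℕ := ⌈b / h⌉₊ with hndef
  have E : ∀ i ∈ Finset.range (n + 1), ∀ᶠ x in 𝓝[>] (0:ℝ),
      |psih (x * ((i:ℝ) * h)) / (Ch * x ^ rhoh * Lh x) - ((i:ℝ) * h) ^ rhoh| ≤ ε / 3 := by
    intro i _
    rcases Nat.eq_zero_or_pos i with hi0 | hip
    · subst hi0
      refine Eventually.of_forall fun x => ?_
      simp [hpsih0, Real.zero_rpow hr.ne', hε3.le]
    · have hc : (0:ℝ) < (i:ℝ) * h := mul_pos (by exact_mod_cast hip) hh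
      have hlim := pointwise_limit rhoh hr Ch hCh Lh hLhpos hLhsv psih hpsih ((i:ℝ) * h) hc
      have hball : ∀ᶠ z in 𝓝 (((i:ℝ) * h) ^ rhoh), |z - ((i:ℝ) * h) ^ rhoh| ≤ ε / 3 := by
        filter_upwards [Metric.closedBall_mem_nhds _ hε3] with z hz
        simpa [Real.dist_eq] using hz
      exact hlim.eventually hball
  have Eall := (Filter.eventually_all_finset (Finset.range (n + 1))).mpr E
  obtain ⟨u, hu, hsub⟩ := mem_nhdsGT_iff_exists_Ioc_subset.mp Eall
  refine ⟨u, hu, ?_⟩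
  intro x hx y hy
  have hx0 : (0:ℝ) < x := hx.1
  have hD : 0 < Ch * x ^ rhoh * Lh x :=
    mul_pos (mul_pos hCh (Real.rpow_pos_of_pos hx0 _)) (hLhpos x hx0)
  have H := hsub hx
  rcases eq_or_lt_of_le hy.1 with h0y | h0y
  · rw [← h0y]
    simp [hpsih0, Real.zero_rpow hr.ne', hε.le]
  · set k : ℕ := ⌈y / h⌉₊ with hkdef
    have hk1 : 1 ≤ k := Nat.one_le_ceil_iff.mpr (div_pos h0y hh)
    have hkn : k ≤ n := Nat.ceil_le_ceil (by gcongr; exact hy.2)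
    set t : ℝ := (k:ℝ) * h with htdef
    set s : ℝ := ((k:ℝ) - 1) * h with hsdef
    have hk1' : (1:ℝ) ≤ (k:ℝ) := by exact_mod_cast hk1
    have hs0 : 0 ≤ s := mul_nonneg (by linarith) hh.le
    have hyt : y ≤ t := by
      have := Nat.le_ceil (y / h)
      rw [div_le_iff₀ hh] at this
      exact this
    have hsy : s ≤ y := by
      have hceil : (k:ℝ) < y / h + 1 := Nat.ceil_lt_add_one (le_of_lt (div_pos h0y hh))
      have : (k:ℝ) - 1 < y / h := by linarith
      rw [lt_div_iff₀ hh] at this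
      exact this.le
    have hcast : ((k - 1 : ℕ) : ℝ) = (k:ℝ) - 1 := by
      push_cast [Nat.cast_sub hk1]; ring
    have Ht : |psih (x * t) / (Ch * x ^ rhoh * Lh x) - t ^ rhoh| ≤ ε / 3 :=
      H k (Finset.mem_range.mpr (Nat.lt_succ_of_le hkn))
    have Hs : |psih (x * s) / (Ch * x ^ rhoh * Lh x) - s ^ rhoh| ≤ ε / 3 := by
      have := H (k - 1) (Finset.mem_range.mpr (Nat.lt_succ_of_le (le_trans (Nat.sub_le _ _) hkn)))
      rwa [hcast] at this
    have hm1 : psih (x * s) ≤ psih (x * y) :=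
      hpsihmono (mul_nonneg hx0.le hs0) (mul_nonneg hx0.le hy.1)
        (mul_le_mul_of_nonneg_left hsy hx0.le)
    have hm2 : psih (x * y) ≤ psih (x * t) :=
      hpsihmono (mul_nonneg hx0.le hy.1) (mul_nonneg hx0.le (le_trans hy.1 hyt))
        (mul_le_mul_of_nonneg_left hyt hx0.le)
    have hd1 : psih (x * s) / (Ch * x ^ rhoh * Lh x) ≤ psih (x * y) / (Ch * x ^ rhoh * Lh x) :=
      by gcongr
    have hd2 : psih (x * y) / (Ch * x ^ rhoh * Lh x) ≤ psih (x * t) / (Ch * x ^ rhoh * Lh x) :=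
      by gcongr
    have hts : t - y ≤ h := by
      have : t = s + h := by rw [htdef, hsdef]; ring
      linarith
    have hys : y - s ≤ h := by
      have : t = s + h := by rw [htdef, hsdef]; ring
      linarith
    have htr : t ^ rhoh ≤ y ^ rhoh + (t - y) ^ rhoh := by
      have : t = y + (t - y) := by ring
      nth_rewrite 1 [this]
      exact real_rpow_add_le_add_rpow hy.1 (sub_nonneg.mpr hyt) hr.le hr1.le
    have hyr : y ^ rhoh ≤ s ^ rhoh + (y - s) ^ rhoh := by
      have : y = s + (y - s) := by ring
      nth_rewrite 1 [this]
      exact real_rpow_add_le_add_rpow hs0 (sub_nonneg.mpr hsy) hr.le hr1.le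
    have h1 : (t - y) ^ rhoh ≤ ε / 3 :=
      le_trans (Real.rpow_le_rpow (by linarith) hts hr.le) hhr
    have h2 : (y - s) ^ rhoh ≤ ε / 3 :=
      le_trans (Real.rpow_le_rpow (by linarith) hys hr.le) hhr
    obtain ⟨Ht1, Ht2⟩ := abs_le.mp Ht
    obtain ⟨Hs1, Hs2⟩ := abs_le.mp Hs
    rw [abs_le]
    constructor <;> linarith
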